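/- For all complex numbers m and all complex colour parameters λ, μ, the coloured Jordanian R-matrix R_m^{λ,μ} is colour-triangular: R_m^{λ,μ} * (R_m^{μ,λ})₂₁ = 1, where for a matrix R indexed by (Fin 2 × Fin 2), R₂₁ is defined by R₂₁((i,j),(k,l)) = R((j,i),(l,k)); equivalently R_m^{λ,μ} = ((R_m^{μ,λ})₂₁)⁻¹. -/
import Mathlib


noncomputable section

open Matrix

/-- The coloured Jordanian `R`-matrix `R_m^{λ,μ}`, indexed by `Fin 2 × Fin 2`
(indices `0,1` correspond to the paper's `1,2`). -/
def RcolJ (m l μ : ℂ) : Matrix (Fin 2 × Fin 2) (Fin 2 × Fin 2) ℂ :=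
  fun p q =>
    if p = q then 1
    else if p = (0, 0) ∧ q = (0, 1) then -(m * (1 - 2 * l))
    else if p = (0, 0) ∧ q = (1, 0) then m * (1 - 2 * μ)
    else if p = (0, 0) ∧ q = (1, 1) then m ^ 2 * (1 - 4 * l * μ)
    else if p = (0, 1) ∧ q = (1, 1) then -(m * (1 + 2 * μ))
    else if p = (1, 0) ∧ q = (1, 1) then m * (1 + 2 * l)
    else 0

/-- `R₂₁`, obtained from `R` by swapping the two tensor factors in rows and columns. -/
def R21 (R : Matrix (Fin 2 × Fin 2) (Fin 2 × Fin 2) ℂ) :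
    Matrix (Fin 2 × Fin 2) (Fin 2 × Fin 2) ℂ :=
  fun p q => R (p.2, p.1) (q.2, q.1)

/-- the coloured Jordanian `R`-matrix is colour-triangular:
`R_m^{λ,μ} * (R_m^{μ,λ})₂₁ = 1`, equivalently `R_m^{λ,μ} = ((R_m^{μ,λ})₂₁)⁻¹`. -/
theorem RcolJ_colour_triangular (m l μ : ℂ) :
    RcolJ m l μ * R21 (RcolJ m μ l) = 1 ∧ RcolJ m l μ = (R21 (RcolJ m μ l))⁻¹ := by
  have h : RcolJ m l μ * R21 (RcolJ m μ l) = 1 := by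
    ext ⟨i, j⟩ ⟨k, l'⟩
    rw [Matrix.mul_apply, show (Finset.univ : Finset (Fin 2 × Fin 2)) = {(0,0),(0,1),(1,0),(1,1)} by decide, Finset.sum_insert (by decide), Finset.sum_insert (by decide), Finset.sum_insert (by decide), Finset.sum_singleton]
    fin_cases i <;> fin_cases j <;> fin_cases k <;> fin_cases l' <;>
      simp [RcolJ, R21, Matrix.one_apply, Prod.ext_iff] <;> ring
  exact ⟨h, Matrix.inv_eq_right_inv (mul_eq_one_comm.mp h) ▸ rfl⟩
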